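/- arXiv:hep-th/9901114 — 2 statements merged into one kernel-verified Lean document; each statement's English description precedes it below -/
import Mathlib

section
/- Let e, p, q ∈ ℂ^N be unit vectors with ⟨p, q⟩ ≠ 0. There exists t ∈ [0,1] such that ⟨e, (1-t)·⟨p,q⟩·p + t·|⟨p,q⟩|²·q⟩ = 0 if and only if Re(⟨e,p⟩·⟨p,q⟩·⟨q,e⟩) ≤ 0 and Im(⟨e,p⟩·⟨p,q⟩·⟨q,e⟩) = 0. -/
open scoped ComplexConjugate

/-- Standard Hermitian inner product on ℂ^N, conjugate-linear in the first argument. -/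
noncomputable def herm {N : ℕ} (x y : Fin N → ℂ) : ℂ := ∑ i, conj (x i) * y i

lemma herm_smul {N : ℕ} (e x : Fin N → ℂ) (α : ℂ) :
    herm e (α • x) = α * herm e x := by
  simp only [herm, Pi.smul_apply, smul_eq_mul, Finset.mul_sum]
  exact Finset.sum_congr rfl fun i _ => by ring

lemma herm_add {N : ℕ} (e x y : Fin N → ℂ) :
    herm e (x + y) = herm e x + herm e y := by
  simp [herm, mul_add, Finset.sum_add_distrib]

lemma herm_conj {N : ℕ} (x y : Fin N → ℂ) :
    herm y x = conj (herm x y) := by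
  simp only [herm, map_sum, map_mul, Complex.conj_conj]
  exact Finset.sum_congr rfl fun i _ => by ring

/-- Lemma 1 of the paper: the geodesic from [p] to [q] meets the hyperplane
orthogonal to e iff the triple product ⟨e,p⟩⟨p,q⟩⟨q,e⟩ has nonpositive real
part and vanishing imaginary part. -/
theorem stmt_1 {N : ℕ} (e p q : Fin N → ℂ)
    (he : herm e e = 1) (hp : herm p p = 1) (hq : herm q q = 1)
    (hpq : herm p q ≠ 0) :
    (∃ t ∈ Set.Icc (0 : ℝ) 1,
        herm e (((1 - t : ℝ) : ℂ) • herm p q • p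
          + ((t : ℝ) : ℂ) • ((‖herm p q‖ ^ 2 : ℝ) : ℂ) • q) = 0)
      ↔ (herm e p * herm p q * herm q e).re ≤ 0
          ∧ (herm e p * herm p q * herm q e).im = 0 := by
  set a := herm e p with ha
  set c := herm p q with hc
  set w := herm e q with hw
  have hqe : herm q e = conj w := herm_conj e q
  rw [hqe]
  set r : ℝ := ‖c‖ ^ 2 with hr
  have hr0 : 0 < r := pow_pos (norm_pos_iff.mpr hpq) 2
  set T : ℂ := a * c * conj w with hT
  set n : ℝ := Complex.normSq (c * a) with hn
  have hn0 : 0 ≤ n := Complex.normSq_nonneg _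
  set nw : ℝ := Complex.normSq w with hnw
  have hexpand : ∀ t : ℝ,
      herm e (((1 - t : ℝ) : ℂ) • c • p + ((t : ℝ) : ℂ) • ((r : ℝ) : ℂ) • q)
        = ((1 - t : ℝ) : ℂ) * (c * a) + ((t : ℝ) : ℂ) * ((r : ℝ) : ℂ) * w := by
    intro t
    rw [herm_add, herm_smul, herm_smul, herm_smul, herm_smul]
    ring
  constructor
  · rintro ⟨t, ⟨ht0, ht1⟩, hEq⟩
    rw [hexpand t] at hEq
    have h1 : ((n : ℝ) : ℂ) = (c * a) * conj (c * a) := by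
      rw [hn]; exact (Complex.mul_conj _).symm
    have h2 : conj T = conj a * conj c * w := by
      rw [hT]; simp only [map_mul, Complex.conj_conj]
    have h4 : conj (c * a) = conj c * conj a := map_mul _ _ _
    have hE2 : ((1 - t : ℝ) : ℂ) * ((n : ℝ) : ℂ)
        + ((t : ℝ) : ℂ) * ((r : ℝ) : ℂ) * conj T = 0 := by
      linear_combination (conj a * conj c) * hEq + ((1 - t : ℝ) : ℂ) * h1
        + ((t : ℝ) : ℂ) * ((r : ℝ) : ℂ) * h2 + ((1 - t : ℝ) : ℂ) * (c * a) * h4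
    have hre : (1 - t) * n + t * r * T.re = 0 := by
      have h3 := congrArg Complex.re hE2
      simpa [Complex.add_re, Complex.mul_re] using h3
    have him : t * r * T.im = 0 := by
      have h3 := congrArg Complex.im hE2
      simpa [Complex.add_im, Complex.mul_im] using h3
    rcases eq_or_lt_of_le ht0 with h0 | h0
    · have hnz : n = 0 := by rw [← h0] at hre; linarith
      have hca : c * a = 0 := by
        rw [hn] at hnz; rwa [Complex.normSq_eq_zero] at hnz
      have hT0 : T = 0 := by rw [hT, mul_comm a c, hca, zero_mul]
      rw [hT0]; simp
    · constructor
      · nlinarith [mul_pos h0 hr0, mul_nonneg (sub_nonneg.mpr ht1) hn0]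
      · rcases mul_eq_zero.mp him with h | h
        · exact absurd h (by positivity)
        · exact h
  · rintro ⟨hre, him⟩
    by_cases hca : c * a = 0
    · exact ⟨0, ⟨le_refl 0, zero_le_one⟩, by rw [hexpand 0]; simp [hca]⟩
    · by_cases hw0 : w = 0
      · exact ⟨1, ⟨zero_le_one, le_refl 1⟩, by rw [hexpand 1]; simp [hw0]⟩
      · have hTne : T ≠ 0 := by
          rw [hT]
          exact mul_ne_zero (by rwa [mul_comm c a] at hca)
            (fun h => hw0 (by simpa using congrArg (starRingEnd ℂ) h))
        have hTre : T = ((T.re : ℝ) : ℂ) := Complex.ext rfl (by simp [him])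
        have hm : 0 < -T.re := by
          rcases lt_or_eq_of_le hre with h | h
          · linarith
          · exact absurd (by rw [hTre, h]; simp) hTne
        set m : ℝ := -T.re with hmdef
        have hnw0 : 0 < nw := by rw [hnw]; exact Complex.normSq_pos.mpr hw0
        set t : ℝ := m / (m + r * nw) with htdef
        have hD : 0 < m + r * nw := by positivity
        refine ⟨t, ⟨by positivity, ?_⟩, ?_⟩
        · rw [htdef, div_le_one hD]; nlinarith
        · rw [hexpand t]
          have hkey : ((nw : ℝ) : ℂ) * (c * a) = T * w := by
            rw [hT, hnw]
            linear_combination -(a * c) * Complex.mul_conj w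
          have hnwC : ((nw : ℝ) : ℂ) ≠ 0 := by exact_mod_cast ne_of_gt hnw0
          have hreal : (1 - t) * T.re + t * r * nw = 0 := by
            have hx : t * (m + r * nw) = m := by
              rw [htdef]; field_simp
            have hTm : T.re = -m := by rw [hmdef]; ring
            rw [hTm]; nlinarith [hx]
          have hco : ((1 - t : ℝ) : ℂ) * T
              + ((t : ℝ) : ℂ) * ((r : ℝ) : ℂ) * ((nw : ℝ) : ℂ) = 0 := by
            rw [hTre]
            exact_mod_cast hreal
          have hfin : ((nw : ℝ) : ℂ)
              * (((1 - t : ℝ) : ℂ) * (c * a) + ((t : ℝ) : ℂ) * ((r : ℝ) : ℂ) * w) = 0 := by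
            linear_combination ((1 - t : ℝ) : ℂ) * hkey + w * hco
          exact (mul_eq_zero.mp hfin).resolve_left hnwC
end

section
/- Let φ₀, φ₁, φ₂, φ₃ be unit vectors in ℂ^N and U₀₁, U₁₂, U₂₃, U₁₃ ∈ U(N). Define φ_IB(s) = s²·⟨φ₀, U₀₁φ₁⟩·⟨φ₁, U₁₂U₂₃φ₃⟩·⟨U₀₁U₁₂U₂₃φ₃, φ₀⟩ + (1-s)²·⟨φ₀, U₀₁φ₁⟩·⟨φ₁, U₁₃φ₃⟩·⟨U₀₁U₁₃φ₃, φ₀⟩ + s(1-s)·⟨φ₀, U₀₁φ₁⟩·(⟨φ₁, U₁₂U₂₃φ₃⟩·⟨U₀₁U₁₃φ₃, φ₀⟩ + ⟨φ₁, U₁₃φ₃⟩·⟨U₀₁U₁₂U₂₃φ₃, φ₀⟩). Then φ_IB(s) is invariant under gauge transformations φᵢ ↦ gᵢφᵢ, U_{ij} ↦ gᵢU_{ij}gⱼ* for unitaries g₀, g₁, g₂, g₃. -/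
open scoped ComplexConjugate

lemma herm_eq {N : ℕ} (x y : Fin N → ℂ) : herm x y = dotProduct (star x) y := rfl

lemma herm_g {N : ℕ} {g : Matrix (Fin N) (Fin N) ℂ} (hg : star g * g = 1)
    (x z : Fin N → ℂ) : herm (g.mulVec x) (g.mulVec z) = herm x z := by
  simp only [herm_eq, Matrix.star_mulVec, Matrix.dotProduct_mulVec, Matrix.vecMul_vecMul,
    Matrix.star_eq_conjTranspose] at hg ⊢
  rw [hg, Matrix.vecMul_one]

lemma vec_cancel {N : ℕ} {h : Matrix (Fin N) (Fin N) ℂ} (hh : star h * h = 1)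
    (g M : Matrix (Fin N) (Fin N) ℂ) (y : Fin N → ℂ) :
    (g * M * star h).mulVec (h.mulVec y) = g.mulVec (M.mulVec y) := by
  rw [Matrix.mulVec_mulVec, mul_assoc, mul_assoc, hh, mul_one, ← Matrix.mulVec_mulVec]

lemma comb {N : ℕ} {h : Matrix (Fin N) (Fin N) ℂ} (hh : star h * h = 1)
    (g k a b : Matrix (Fin N) (Fin N) ℂ) :
    (g * a * star h) * (h * b * star k) = g * (a * b) * star k := by
  simp only [mul_assoc]
  rw [← mul_assoc (star h) h, hh, one_mul]

/-- The function φ_IB of Eq. (IB) of the paper (U_{ijk...} := U_{ij}U_{jk}⋯). -/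
noncomputable def phiIB {N : ℕ} (φ0 φ1 φ3 : Fin N → ℂ)
    (U01 U12 U13 U23 : Matrix (Fin N) (Fin N) ℂ) (s : ℝ) : ℂ :=
  ((s : ℝ) : ℂ) ^ 2 * herm φ0 (U01.mulVec φ1)
      * herm φ1 ((U12 * U23).mulVec φ3) * herm ((U01 * U12 * U23).mulVec φ3) φ0
    + ((1 - s : ℝ) : ℂ) ^ 2 * herm φ0 (U01.mulVec φ1)
      * herm φ1 (U13.mulVec φ3) * herm ((U01 * U13).mulVec φ3) φ0
    + ((s : ℝ) : ℂ) * ((1 - s : ℝ) : ℂ) * herm φ0 (U01.mulVec φ1)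
      * (herm φ1 ((U12 * U23).mulVec φ3) * herm ((U01 * U13).mulVec φ3) φ0
          + herm φ1 (U13.mulVec φ3) * herm ((U01 * U12 * U23).mulVec φ3) φ0)

/-- Gauge invariance of φ_IB under φᵢ ↦ gᵢφᵢ, U_{ij} ↦ gᵢ U_{ij} gⱼ*. -/
theorem stmt_13 {N : ℕ} (φ0 φ1 φ2 φ3 : Fin N → ℂ)
    (h0 : herm φ0 φ0 = 1) (h1 : herm φ1 φ1 = 1) (h2 : herm φ2 φ2 = 1)
    (h3 : herm φ3 φ3 = 1)
    (U01 U12 U13 U23 : Matrix (Fin N) (Fin N) ℂ)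
    (hU01 : U01 ∈ Matrix.unitaryGroup (Fin N) ℂ)
    (hU12 : U12 ∈ Matrix.unitaryGroup (Fin N) ℂ)
    (hU13 : U13 ∈ Matrix.unitaryGroup (Fin N) ℂ)
    (hU23 : U23 ∈ Matrix.unitaryGroup (Fin N) ℂ)
    (g0 g1 g2 g3 : Matrix (Fin N) (Fin N) ℂ)
    (hg0 : g0 ∈ Matrix.unitaryGroup (Fin N) ℂ)
    (hg1 : g1 ∈ Matrix.unitaryGroup (Fin N) ℂ)
    (hg2 : g2 ∈ Matrix.unitaryGroup (Fin N) ℂ)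
    (hg3 : g3 ∈ Matrix.unitaryGroup (Fin N) ℂ) :
    ∀ s : ℝ,
      phiIB (g0.mulVec φ0) (g1.mulVec φ1) (g3.mulVec φ3)
          (g0 * U01 * star g1) (g1 * U12 * star g2)
          (g1 * U13 * star g3) (g2 * U23 * star g3) s
        = phiIB φ0 φ1 φ3 U01 U12 U13 U23 s := by
  intro s
  have e1 : (g1 * U12 * star g2) * (g2 * U23 * star g3) = g1 * (U12 * U23) * star g3 :=
    comb hg2.1 g1 g3 U12 U23
  have e2 : (g0 * U01 * star g1) * (g1 * U12 * star g2) * (g2 * U23 * star g3)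
      = g0 * (U01 * U12 * U23) * star g3 := by
    rw [mul_assoc, e1, comb hg1.1 g0 g3 U01 (U12 * U23), ← mul_assoc U01 U12 U23]
  have e3 : (g0 * U01 * star g1) * (g1 * U13 * star g3) = g0 * (U01 * U13) * star g3 :=
    comb hg1.1 g0 g3 U01 U13
  simp only [phiIB, e1, e2, e3, vec_cancel hg1.1, vec_cancel hg3.1,
    herm_g hg0.1, herm_g hg1.1]
end
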